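/- Let G be a finite group whose abelianization G/G' is not a p-group for any prime p (i.e. |G/G'| has at least two prime divisors). Then σ₀(G) = 2: there exist two proper subgroups of G whose union contains every element of G of prime power order, and one proper subgroup never suffices. -/

import Mathlib

/-- A primary covering of `G`: a finite family of proper subgroups whose union
contains every element of prime power order. -/
def IsPrimaryCovering {G : Type*} [Group G] (𝒜 : Finset (Subgroup G)) : Prop :=
  (∀ H ∈ 𝒜, H ≠ ⊤) ∧ ∀ g : G, IsPrimePow (orderOf g) → ∃ H ∈ 𝒜, g ∈ H

/-- The primary covering number `σ₀(G)`, with value `⊤` if no primary covering exists. -/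
noncomputable def primaryCoveringNumber (G : Type*) [Group G] : ℕ∞ :=
  sInf {n : ℕ∞ | ∃ 𝒜 : Finset (Subgroup G), IsPrimaryCovering 𝒜 ∧ (𝒜.card : ℕ∞) = n}

/-- Subgroup of elements with order coprime to `p`, in a commutative group. -/
def coprimeOrder (A : Type*) [CommGroup A] (p : ℕ) : Subgroup A where
  carrier := {a | (orderOf a).Coprime p}
  one_mem' := by simp
  mul_mem' := by
    intro a b ha hb
    exact Nat.Coprime.coprime_dvd_left ((Commute.all a b).orderOf_mul_dvd_lcm)
      (Nat.Coprime.coprime_dvd_left (Nat.lcm_dvd_mul _ _) (ha.mul hb))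
  inv_mem' := by intro a ha; simpa using ha

lemma mem_coprimeOrder {A : Type*} [CommGroup A] {p : ℕ} {a : A} :
    a ∈ coprimeOrder A p ↔ (orderOf a).Coprime p := Iff.rfl

/-- If a subgroup contains all elements of prime power order, it is everything. -/
lemma orderOf_zpow_dvd' {G : Type*} [Group G] (x : G) (u : ℤ) : orderOf (x ^ u) ∣ orderOf x := by
  apply orderOf_dvd_of_pow_eq_one
  rw [← zpow_natCast (x ^ u), ← zpow_mul, mul_comm, zpow_mul, zpow_natCast,
    pow_orderOf_eq_one, one_zpow]

lemma subgroup_eq_top_of_primePow {G : Type*} [Group G] [Finite G] (H : Subgroup G)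
    (hH : ∀ x : G, IsPrimePow (orderOf x) → x ∈ H) (g : G) : g ∈ H := by
  -- strong induction on orderOf g
  suffices h : ∀ n (g : G), orderOf g = n → g ∈ H from h (orderOf g) g rfl
  intro n
  induction n using Nat.strong_induction_on with
  | _ n ih =>
    intro g hg
    have hn0 : n ≠ 0 := by
      rw [← hg]; exact (orderOf_pos g).ne'
    rcases eq_or_ne n 1 with h1 | h1
    · have : g = 1 := orderOf_eq_one_iff.mp (hg.trans h1)
      exact this ▸ H.one_mem
    by_cases hpp : IsPrimePow n
    · exact hH g (hg ▸ hpp)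
    -- n has at least two prime factors
    obtain ⟨p, hp, hpd⟩ := Nat.exists_prime_and_dvd h1
    set k := n.factorization p with hk
    have hk1 : 1 ≤ k := (Nat.Prime.factorization_pos_of_dvd hp hn0 hpd)
    set m := n / p ^ k with hm
    have hnm : p ^ k * m = n := Nat.ordProj_mul_ordCompl_eq_self n p
    have hcop : Nat.Coprime (p ^ k) m :=
      Nat.Coprime.pow_left _ (Nat.coprime_ordCompl hp hn0)
    have hm1 : m ≠ 1 := by
      intro hm1
      exact hpp ⟨p, k, hp.prime, hk1, by rw [← hnm, hm1, mul_one]⟩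
    have hm0 : m ≠ 0 := by
      intro hm0; rw [hm0, mul_zero] at hnm; exact hn0 hnm.symm
    -- order computations
    have hopk : orderOf (g ^ (p ^ k)) = m := by
      rw [orderOf_pow, hg, ← hnm, Nat.gcd_eq_right (dvd_mul_right _ _),
        Nat.mul_div_cancel_left _ (pow_pos hp.pos k)]
    have hom : orderOf (g ^ m) = p ^ k := by
      rw [orderOf_pow, hg, ← hnm, Nat.gcd_eq_right (dvd_mul_left _ _),
        Nat.mul_div_cancel _ (Nat.pos_of_ne_zero hm0)]
    -- bezout
    obtain ⟨u, v, huv⟩ := Nat.Coprime.isCoprime hcop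
    have hgsplit : g = (g ^ (p ^ k)) ^ u * (g ^ m) ^ v := by
      rw [← zpow_natCast g (p ^ k), ← zpow_natCast g m, ← zpow_mul, ← zpow_mul,
        ← zpow_add, mul_comm (↑(p ^ k)) u, mul_comm (↑m) v, huv, zpow_one]
    rw [hgsplit]
    have hmem1 : (g ^ (p ^ k)) ^ u ∈ H := by
      have hdvd : orderOf ((g ^ (p ^ k)) ^ u) ∣ m := by
        rw [← hopk]; exact orderOf_zpow_dvd' _ u
      have hlt : orderOf ((g ^ (p ^ k)) ^ u) < n := by
        calc orderOf ((g ^ (p ^ k)) ^ u) ≤ m := Nat.le_of_dvd (Nat.pos_of_ne_zero hm0) hdvd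
          _ < n := by
            rw [← hnm]
            exact lt_mul_of_one_lt_left (Nat.pos_of_ne_zero hm0)
              (Nat.one_lt_pow (Nat.one_le_iff_ne_zero.mp hk1) hp.one_lt)
      exact ih _ hlt _ rfl
    have hmem2 : (g ^ m) ^ v ∈ H := by
      have hdvd : orderOf ((g ^ m) ^ v) ∣ p ^ k := by
        rw [← hom]; exact orderOf_zpow_dvd' _ v
      obtain ⟨j, hj, hje⟩ := (Nat.dvd_prime_pow hp).mp hdvd
      rcases Nat.eq_zero_or_pos j with hj0 | hj0
      · have : (g ^ m) ^ v = 1 := orderOf_eq_one_iff.mp (by rw [hje, hj0, pow_zero])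
        exact this ▸ H.one_mem
      · exact hH _ ⟨p, j, hp.prime, hj0, hje.symm⟩
    exact H.mul_mem hmem1 hmem2

theorem stmt_17 (G : Type*) [Group G] [Finite G]
    (h : ∀ p : ℕ, p.Prime → ¬ IsPGroup p (Abelianization G)) :
    primaryCoveringNumber G = 2 := by
  classical
  set A := Abelianization G with hA
  have hofsurj : Function.Surjective (Abelianization.of : G → A) :=
    fun a => QuotientGroup.induction_on a fun g => ⟨g, rfl⟩
  haveI : Finite A := Finite.of_surjective _ hofsurj
  have hA1 : Nat.card A ≠ 1 := by
    intro h1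
    exact h 2 Nat.prime_two (IsPGroup.iff_card.mpr ⟨0, by simp; exact h1⟩)
  have hA0 : Nat.card A ≠ 0 := Nat.card_pos.ne'
  obtain ⟨p, hp, hpd⟩ := Nat.exists_prime_and_dvd hA1
  haveI : Fact p.Prime := ⟨hp⟩
  have hq : ∃ q : ℕ, q.Prime ∧ q ∣ Nat.card A ∧ q ≠ p := by
    by_contra hq
    push_neg at hq
    exact h p hp (IsPGroup.iff_card.mpr ⟨_, Nat.eq_prime_pow_of_unique_prime_dvd hA0
      fun {d} hd hdd => hq d hd hdd⟩)
  obtain ⟨q, hq, hqd, hqp⟩ := hq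
  haveI : Fact q.Prime := ⟨hq⟩
  obtain ⟨a, ha⟩ := exists_prime_orderOf_dvd_card' (G := A) p hpd
  obtain ⟨b, hb⟩ := exists_prime_orderOf_dvd_card' (G := A) q hqd
  obtain ⟨ga, hga⟩ := hofsurj a
  obtain ⟨gb, hgb⟩ := hofsurj b
  set Kp : Subgroup G := (coprimeOrder A p).comap (Abelianization.of) with hKp
  set Kq : Subgroup G := (coprimeOrder A q).comap (Abelianization.of) with hKq
  have hga_not : ga ∉ Kp := by
    intro hmem
    have : (orderOf a).Coprime p := by rwa [hKp, Subgroup.mem_comap, hga] at hmem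
    rw [ha] at this
    exact hp.one_lt.ne' (by simpa [Nat.Coprime, Nat.gcd_self] using this)
  have hgb_not : gb ∉ Kq := by
    intro hmem
    have : (orderOf b).Coprime q := by rwa [hKq, Subgroup.mem_comap, hgb] at hmem
    rw [hb] at this
    exact hq.one_lt.ne' (by simpa [Nat.Coprime, Nat.gcd_self] using this)
  have hga_in : ga ∈ Kq := by
    rw [hKq, Subgroup.mem_comap, hga, mem_coprimeOrder, ha]
    exact (Nat.coprime_primes hp hq).mpr (Ne.symm hqp)
  have hKptop : Kp ≠ ⊤ := fun ht => hga_not (ht ▸ Subgroup.mem_top ga)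
  have hKqtop : Kq ≠ ⊤ := fun ht => hgb_not (ht ▸ Subgroup.mem_top gb)
  have hne : Kp ≠ Kq := fun he => hga_not (he ▸ hga_in)
  have hcover : IsPrimaryCovering ({Kp, Kq} : Finset (Subgroup G)) := by
    constructor
    · intro H hH
      rcases Finset.mem_insert.mp hH with rfl | hH
      · exact hKptop
      · rw [Finset.mem_singleton.mp hH]; exact hKqtop
    · rintro x ⟨r, j, hr, hj, hre⟩
      replace hr : r.Prime := hr.nat_prime
      have hdvd : orderOf (Abelianization.of x) ∣ r ^ j := by
        rw [hre]; exact orderOf_map_dvd _ x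
      obtain ⟨i, hi, hie⟩ := (Nat.dvd_prime_pow hr).mp hdvd
      by_cases hrp : r = p
      · refine ⟨Kq, by simp, ?_⟩
        rw [hKq, Subgroup.mem_comap, mem_coprimeOrder, hie]
        exact Nat.Coprime.pow_left _
          ((Nat.coprime_primes hr hq).mpr (by rw [hrp]; exact Ne.symm hqp))
      · refine ⟨Kp, by simp, ?_⟩
        rw [hKp, Subgroup.mem_comap, mem_coprimeOrder, hie]
        exact Nat.Coprime.pow_left _ ((Nat.coprime_primes hr hp).mpr hrp)
  refine le_antisymm ?_ ?_
  · exact sInf_le ⟨{Kp, Kq}, hcover, by rw [Finset.card_pair hne]; rfl⟩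
  · refine le_sInf ?_
    rintro b' ⟨𝒜, ⟨hprop, hcov⟩, rfl⟩
    have h2 : 2 ≤ 𝒜.card := by
      by_contra hlt
      push_neg at hlt
      interval_cases hc : 𝒜.card
      · -- empty covering impossible: there is an element of prime order in G
        have hpG : p ∣ Nat.card G := by
          have h1 : orderOf a ∣ orderOf ga := by rw [← hga]; exact orderOf_map_dvd _ ga
          exact dvd_trans (ha ▸ h1) (orderOf_dvd_natCard ga)
        obtain ⟨x, hx⟩ := exists_prime_orderOf_dvd_card' (G := G) p hpG
        obtain ⟨H, hH, _⟩ := hcov x (by rw [hx]; exact hp.isPrimePow)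
        rw [Finset.card_eq_zero.mp hc] at hH
        exact absurd hH (Finset.notMem_empty H)
      · obtain ⟨H, hHe⟩ := Finset.card_eq_one.mp hc
        have hHtop : H = ⊤ := by
          rw [Subgroup.eq_top_iff']
          intro x
          refine subgroup_eq_top_of_primePow H (fun y hy => ?_) x
          obtain ⟨H', hH', hyH'⟩ := hcov y hy
          rw [hHe, Finset.mem_singleton] at hH'
          exact hH' ▸ hyH'
        exact hprop H (by rw [hHe]; exact Finset.mem_singleton_self H) hHtop
    exact_mod_cast h2
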